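/- (Determining equation) Let a ∈ ℝ_{>0}^{3+3n}, λ ∈ ℝ_{>0}^{3n}, and let ξ > 0 satisfy ξ ≠ ξ* and θ(ξ) = 0. Set g = (g1(ξ), ξ, g3(ξ)). Then g ∈ ℝ_{>0}^3 and b := diag(g^L) a is a positive steady state of ẋ = S diag(κ(a,λ)) Φ(x) satisfying Z b = Z a; if in addition ξ ≠ 1, then b ≠ a. Moreover, distinct such zeros ξ of θ yield distinct steady states b. -/

import Mathlib

open Finset

namespace Phos

noncomputable section

/-- Standard basis vector of `ℝ^N`, with `1`-based index `j`. -/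
def e (N : ℕ) (j : ℕ) : Fin N → ℝ := fun m => if (m : ℕ) + 1 = j then 1 else 0

/-- Standard basis vector of `ℕ^N`, with `1`-based index `j`. -/
def eN (N : ℕ) (j : ℕ) : Fin N → ℕ := fun m => if (m : ℕ) + 1 = j then 1 else 0

/-- The stoichiometric matrix `S` of the `n`-site sequential distributive
phosphorylation network.  For each `i = 1,…,n` the six columns `6(i−1)+1,…,6(i−1)+6`
are `e_{1+3i}−e_1−e_{3i−1}`, `e_1+e_{3i−1}−e_{1+3i}`, `e_1+e_{2+3i}−e_{1+3i}`,
`e_{3+3i}−e_3−e_{2+3i}`, `e_3+e_{2+3i}−e_{3+3i}`, `e_3+e_{3i−1}−e_{3+3i}`. -/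
def Smat (n : ℕ) : Matrix (Fin (3*n+3)) (Fin (6*n)) ℝ :=
  Matrix.of fun m r =>
    (![e (3*n+3) (1+3*((r : ℕ)/6+1)) - e (3*n+3) 1 - e (3*n+3) (3*((r : ℕ)/6+1)-1),
       e (3*n+3) 1 + e (3*n+3) (3*((r : ℕ)/6+1)-1) - e (3*n+3) (1+3*((r : ℕ)/6+1)),
       e (3*n+3) 1 + e (3*n+3) (2+3*((r : ℕ)/6+1)) - e (3*n+3) (1+3*((r : ℕ)/6+1)),
       e (3*n+3) (3+3*((r : ℕ)/6+1)) - e (3*n+3) 3 - e (3*n+3) (2+3*((r : ℕ)/6+1)),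
       e (3*n+3) 3 + e (3*n+3) (2+3*((r : ℕ)/6+1)) - e (3*n+3) (3+3*((r : ℕ)/6+1)),
       e (3*n+3) 3 + e (3*n+3) (3*((r : ℕ)/6+1)-1) - e (3*n+3) (3+3*((r : ℕ)/6+1))])
      ⟨(r : ℕ) % 6, Nat.mod_lt _ (by norm_num)⟩ m

/-- The rate exponent matrix `Y`: for each `i = 1,…,n` the six columns
`6(i−1)+1,…,6(i−1)+6` are `e_1+e_{3i−1}`, `e_{1+3i}`, `e_{1+3i}`,
`e_3+e_{2+3i}`, `e_{3+3i}`, `e_{3+3i}`. -/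
def Ymat (n : ℕ) : Matrix (Fin (3*n+3)) (Fin (6*n)) ℕ :=
  Matrix.of fun m r =>
    (![eN (3*n+3) 1 + eN (3*n+3) (3*((r : ℕ)/6+1)-1),
       eN (3*n+3) (1+3*((r : ℕ)/6+1)),
       eN (3*n+3) (1+3*((r : ℕ)/6+1)),
       eN (3*n+3) 3 + eN (3*n+3) (2+3*((r : ℕ)/6+1)),
       eN (3*n+3) (3+3*((r : ℕ)/6+1)),
       eN (3*n+3) (3+3*((r : ℕ)/6+1))])
      ⟨(r : ℕ) % 6, Nat.mod_lt _ (by norm_num)⟩ m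

/-- The monomial map `Φ(x)_j = ∏ₘ xₘ^{Y_{mj}}`. -/
def Phi (n : ℕ) (x : Fin (3*n+3) → ℝ) : Fin (6*n) → ℝ :=
  fun r => ∏ m, x m ^ (Ymat n m r)

/-- The conservation matrix `Z` (rows `z1, z2, z3`). -/
def Zmat (n : ℕ) : Matrix (Fin 3) (Fin (3*n+3)) ℝ :=
  Matrix.of fun r j =>
    if (r : ℕ) = 0 then (if (j : ℕ) % 3 = 0 then 1 else 0)
    else if (r : ℕ) = 1 then
      (if (j : ℕ) % 3 = 1 then 1 else if (j : ℕ) = 0 ∨ (j : ℕ) = 2 then -1 else 0)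
    else (if (j : ℕ) % 3 = 2 then 1 else 0)

/-- The `6 × 3` block `E0`. -/
def E0 : Fin 6 → Fin 3 → ℝ :=
  ![![1,0,1], ![1,0,0], ![0,0,1], ![0,1,1], ![0,1,0], ![0,0,1]]

/-- The block diagonal matrix `E` with `n` copies of `E0`. -/
def Emat (n : ℕ) : Matrix (Fin (6*n)) (Fin (3*n)) ℝ :=
  Matrix.of fun r c =>
    if (r : ℕ) / 6 = (c : ℕ) / 3 then
      E0 ⟨(r : ℕ) % 6, Nat.mod_lt _ (by norm_num)⟩ ⟨(c : ℕ) % 3, Nat.mod_lt _ (by norm_num)⟩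
    else 0

/-- The matrix `L ∈ ℤ^{(3+3n)×3}`: row `1 = (1, n−1, −1)`, row `2 = (−1, −n, 0)`,
row `3 = (1, n−2, −1)`, and for `i = 1,…,n` rows `1+3i` and `3+3i` equal
`(0, i−2, −1)` while row `2+3i = (−1, i−n, 0)`. -/
def Lmat (n : ℕ) : Matrix (Fin (3*n+3)) (Fin 3) ℤ :=
  Matrix.of fun j c =>
    if (j : ℕ) = 0 then ![1, (n : ℤ) - 1, -1] c
    else if (j : ℕ) = 1 then ![-1, -(n : ℤ), 0] c
    else if (j : ℕ) = 2 then ![1, (n : ℤ) - 2, -1] c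
    else if (j : ℕ) % 3 = 1 then ![-1, (((j : ℕ) / 3 : ℕ) : ℤ) - (n : ℤ), 0] c
    else ![0, (((j : ℕ) / 3 : ℕ) : ℤ) - 2, -1] c

/-- `g^L ∈ ℝ_{>0}^{3+3n}`, `(g^L)_j = g₁^{L_{j1}} g₂^{L_{j2}} g₃^{L_{j3}}`. -/
def gL (n : ℕ) (g : Fin 3 → ℝ) : Fin (3*n+3) → ℝ :=
  fun j => ∏ c, g c ^ (Lmat n j c)

/-- The coset condition map `Θ(g,a) = Z diag(a) (g^L − 𝟙)`. -/
def Theta (n : ℕ) (g : Fin 3 → ℝ) (a : Fin (3*n+3) → ℝ) : Fin 3 → ℝ :=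
  (Zmat n).mulVec (fun j => a j * (gL n g j - 1))

/-- The rate constants `κ(a,λ)_j = (Eλ)_j / Φ(a)_j`. -/
def kappaOf (n : ℕ) (a : Fin (3*n+3) → ℝ) (lam : Fin (3*n) → ℝ) : Fin (6*n) → ℝ :=
  fun r => (Emat n).mulVec lam r / Phi n a r

/-- `x` is a (positive) steady state of `ẋ = S diag(κ) Φ(x)`. -/
def isSteady (n : ℕ) (κ : Fin (6*n) → ℝ) (x : Fin (3*n+3) → ℝ) : Prop :=
  (Smat n).mulVec (fun r => κ r * Phi n x r) = 0

/-- The `1`-based component `a_j` of a vector `a ∈ ℝ^{3+3n}`. -/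
def av (n : ℕ) (a : Fin (3*n+3) → ℝ) (j : ℕ) : ℝ :=
  if h : j - 1 < 3*n+3 then a ⟨j - 1, h⟩ else 0

/-- `ω1 = Σ_{k=0}^n a_{1+3k}`. -/
def om1 (n : ℕ) (a : Fin (3*n+3) → ℝ) : ℝ := ∑ k ∈ Finset.range (n+1), av n a (1+3*k)

/-- `ω2 = −a₁ − a₃ + Σ_{k=0}^n a_{2+3k}`. -/
def om2 (n : ℕ) (a : Fin (3*n+3) → ℝ) : ℝ :=
  -(av n a 1) - av n a 3 + ∑ k ∈ Finset.range (n+1), av n a (2+3*k)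

/-- `ω3 = Σ_{k=0}^n a_{3+3k}`. -/
def om3 (n : ℕ) (a : Fin (3*n+3) → ℝ) : ℝ := ∑ k ∈ Finset.range (n+1), av n a (3+3*k)

/-- `Ω2(ξ) = Σ_{k=0}^n a_{2+3k} ξ^k`. -/
def Om2 (n : ℕ) (a : Fin (3*n+3) → ℝ) (ξ : ℝ) : ℝ :=
  ∑ k ∈ Finset.range (n+1), av n a (2+3*k) * ξ ^ k

/-- `Ω4(ξ) = Σ_{k=1}^n a_{1+3k} ξ^{k−1}`. -/
def Om4 (n : ℕ) (a : Fin (3*n+3) → ℝ) (ξ : ℝ) : ℝ :=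
  ∑ k ∈ Finset.Icc 1 n, av n a (1+3*k) * ξ ^ (k-1)

/-- `Ω6(ξ) = Σ_{k=1}^n a_{3+3k} ξ^{k−1}`. -/
def Om6 (n : ℕ) (a : Fin (3*n+3) → ℝ) (ξ : ℝ) : ℝ :=
  ∑ k ∈ Finset.Icc 1 n, av n a (3+3*k) * ξ ^ (k-1)

/-- `Δ(ξ) = (a₁/ω1)ξ − a₃/ω3`. -/
def Dlt (n : ℕ) (a : Fin (3*n+3) → ℝ) (ξ : ℝ) : ℝ :=
  av n a 1 / om1 n a * ξ - av n a 3 / om3 n a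

/-- `ξ* = (ω1 a₃)/(a₁ ω3)`. -/
def xistar (n : ℕ) (a : Fin (3*n+3) → ℝ) : ℝ :=
  om1 n a * av n a 3 / (av n a 1 * om3 n a)

/-- `F1(ξ) = Ω6(ξ)/ω3 − Ω4(ξ)/ω1`. -/
def F1 (n : ℕ) (a : Fin (3*n+3) → ℝ) (ξ : ℝ) : ℝ :=
  Om6 n a ξ / om3 n a - Om4 n a ξ / om1 n a

/-- `F3(ξ) = (a₁ξ/ω1)(Ω6(ξ)/ω3) − (a₃/ω3)(Ω4(ξ)/ω1)`. -/
def F3 (n : ℕ) (a : Fin (3*n+3) → ℝ) (ξ : ℝ) : ℝ :=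
  av n a 1 * ξ / om1 n a * (Om6 n a ξ / om3 n a) - av n a 3 / om3 n a * (Om4 n a ξ / om1 n a)

/-- `A(ξ) = (Ω4(ξ)+Ω6(ξ))Ω2(ξ)`. -/
def Ap (n : ℕ) (a : Fin (3*n+3) → ℝ) (ξ : ℝ) : ℝ := (Om4 n a ξ + Om6 n a ξ) * Om2 n a ξ

/-- `B(ξ) = (a₁ξ + a₃)Ω2(ξ) − ω2 ξ (Ω4(ξ)+Ω6(ξ))`. -/
def Bp (n : ℕ) (a : Fin (3*n+3) → ℝ) (ξ : ℝ) : ℝ :=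
  (av n a 1 * ξ + av n a 3) * Om2 n a ξ - om2 n a * ξ * (Om4 n a ξ + Om6 n a ξ)

/-- `C(ξ) = ξ(a₁ξ + a₃)(ω1+ω2+ω3)`. -/
def Cp (n : ℕ) (a : Fin (3*n+3) → ℝ) (ξ : ℝ) : ℝ :=
  ξ * (av n a 1 * ξ + av n a 3) * (om1 n a + om2 n a + om3 n a)

/-- `P(ξ) = A(ξ)Δ(ξ)² + B(ξ)Δ(ξ)F1(ξ) − C(ξ)F1(ξ)²`. -/
def Pp (n : ℕ) (a : Fin (3*n+3) → ℝ) (ξ : ℝ) : ℝ :=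
  Ap n a ξ * (Dlt n a ξ)^2 + Bp n a ξ * Dlt n a ξ * F1 n a ξ - Cp n a ξ * (F1 n a ξ)^2

/-- `θ(ξ) = 2C(ξ)F1(ξ) − Δ(ξ)[B(ξ) + (B(ξ)² + 4A(ξ)C(ξ))^{1/2}]`. -/
def thetaFun (n : ℕ) (a : Fin (3*n+3) → ℝ) (ξ : ℝ) : ℝ :=
  2 * Cp n a ξ * F1 n a ξ -
    Dlt n a ξ * (Bp n a ξ + Real.sqrt ((Bp n a ξ)^2 + 4 * Ap n a ξ * Cp n a ξ))

/-- `g1(ξ) = ξ^{1−n} F1(ξ)/Δ(ξ)`. -/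
def g1f (n : ℕ) (a : Fin (3*n+3) → ℝ) (ξ : ℝ) : ℝ :=
  ξ ^ ((1 : ℤ) - (n : ℤ)) * F1 n a ξ / Dlt n a ξ

/-- `g3(ξ) = ξ^{−1} F3(ξ)/Δ(ξ)`. -/
def g3f (n : ℕ) (a : Fin (3*n+3) → ℝ) (ξ : ℝ) : ℝ :=
  ξ⁻¹ * F3 n a ξ / Dlt n a ξ

/-- The candidate second steady state `b = diag(g^L) a` built from a zero `ξ`
of the determining equation, with `g = (g1(ξ), ξ, g3(ξ))`. -/
def bOf (n : ℕ) (a : Fin (3*n+3) → ℝ) (ξ : ℝ) : Fin (3*n+3) → ℝ :=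
  fun j => gL n ![g1f n a ξ, ξ, g3f n a ξ] j * a j

end

end Phos
namespace Phos


lemma av_pos {n : ℕ} {a : Fin (3*n+3) → ℝ} (ha : ∀ j, 0 < a j) {j : ℕ}
    (h : j - 1 < 3*n+3) : 0 < av n a j := by
  rw [av, dif_pos h]; exact ha _

lemma om1_pos {n : ℕ} {a : Fin (3*n+3) → ℝ} (ha : ∀ j, 0 < a j) : 0 < om1 n a := by
  refine Finset.sum_pos (fun k hk => ?_) ⟨0, by simp⟩
  have hk' : k ≤ n := Nat.lt_succ_iff.mp (Finset.mem_range.mp hk)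
  exact av_pos ha (by omega)

lemma om3_pos {n : ℕ} {a : Fin (3*n+3) → ℝ} (ha : ∀ j, 0 < a j) : 0 < om3 n a := by
  refine Finset.sum_pos (fun k hk => ?_) ⟨0, by simp⟩
  have hk' : k ≤ n := Nat.lt_succ_iff.mp (Finset.mem_range.mp hk)
  exact av_pos ha (by omega)

lemma Om2_pos {n : ℕ} {a : Fin (3*n+3) → ℝ} (ha : ∀ j, 0 < a j) {ξ : ℝ}
    (hξ : 0 < ξ) : 0 < Om2 n a ξ := by
  refine Finset.sum_pos (fun k hk => ?_) ⟨0, by simp⟩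
  have hk' : k ≤ n := Nat.lt_succ_iff.mp (Finset.mem_range.mp hk)
  exact mul_pos (av_pos ha (by omega)) (pow_pos hξ _)

lemma Om4_pos {n : ℕ} (hn : 1 ≤ n) {a : Fin (3*n+3) → ℝ} (ha : ∀ j, 0 < a j) {ξ : ℝ}
    (hξ : 0 < ξ) : 0 < Om4 n a ξ := by
  refine Finset.sum_pos (fun k hk => ?_) ⟨1, by simp [hn]⟩
  have hk' : k ≤ n := (Finset.mem_Icc.mp hk).2
  exact mul_pos (av_pos ha (by omega)) (pow_pos hξ _)

lemma Om6_pos {n : ℕ} (hn : 1 ≤ n) {a : Fin (3*n+3) → ℝ} (ha : ∀ j, 0 < a j) {ξ : ℝ}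
    (hξ : 0 < ξ) : 0 < Om6 n a ξ := by
  refine Finset.sum_pos (fun k hk => ?_) ⟨1, by simp [hn]⟩
  have hk' : k ≤ n := (Finset.mem_Icc.mp hk).2
  exact mul_pos (av_pos ha (by omega)) (pow_pos hξ _)

lemma omsum_pos {n : ℕ} (hn : 1 ≤ n) {a : Fin (3*n+3) → ℝ} (ha : ∀ j, 0 < a j) :
    0 < om1 n a + om2 n a + om3 n a := by
  have h1 : om1 n a = (∑ k ∈ Finset.range n, av n a (1+3*(k+1))) + av n a (1+3*0) := by
    rw [om1, Finset.sum_range_succ']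
  have h3 : om3 n a = (∑ k ∈ Finset.range n, av n a (3+3*(k+1))) + av n a (3+3*0) := by
    rw [om3, Finset.sum_range_succ']
  have hA : 0 ≤ ∑ k ∈ Finset.range n, av n a (1+3*(k+1)) :=
    Finset.sum_nonneg fun k hk => le_of_lt (av_pos ha (by
      have := Finset.mem_range.mp hk; omega))
  have hB : 0 ≤ ∑ k ∈ Finset.range n, av n a (3+3*(k+1)) :=
    Finset.sum_nonneg fun k hk => le_of_lt (av_pos ha (by
      have := Finset.mem_range.mp hk; omega))
  have hC : 0 < ∑ k ∈ Finset.range (n+1), av n a (2+3*k) := by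
    refine Finset.sum_pos (fun k hk => ?_) ⟨0, by simp⟩
    have hk' : k ≤ n := Nat.lt_succ_iff.mp (Finset.mem_range.mp hk)
    exact av_pos ha (by omega)
  rw [h1, h3, om2]
  simp only [Nat.mul_zero, Nat.add_zero]
  linarith

lemma Ap_pos {n : ℕ} (hn : 1 ≤ n) {a : Fin (3*n+3) → ℝ} (ha : ∀ j, 0 < a j) {ξ : ℝ}
    (hξ : 0 < ξ) : 0 < Ap n a ξ :=
  mul_pos (by linarith [Om4_pos hn ha hξ, Om6_pos hn ha hξ]) (Om2_pos ha hξ)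

lemma Cp_pos {n : ℕ} (hn : 1 ≤ n) {a : Fin (3*n+3) → ℝ} (ha : ∀ j, 0 < a j) {ξ : ℝ}
    (hξ : 0 < ξ) : 0 < Cp n a ξ := by
  have h1 := av_pos (n := n) ha (j := 1) (by omega)
  have h3 := av_pos (n := n) ha (j := 3) (by omega)
  exact mul_pos (mul_pos hξ (by nlinarith)) (omsum_pos hn ha)

lemma Dlt_ne {n : ℕ} {a : Fin (3*n+3) → ℝ} (ha : ∀ j, 0 < a j) {ξ : ℝ}
    (hne : ξ ≠ xistar n a) : Dlt n a ξ ≠ 0 := by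
  intro h
  apply hne
  have h1 := av_pos (n := n) ha (j := 1) (by omega)
  have h3 := av_pos (n := n) ha (j := 3) (by omega)
  have hw1 := om1_pos ha
  have hw3 := om3_pos ha
  rw [Dlt] at h
  rw [xistar]
  field_simp at h ⊢
  linarith

/-- Core analytic consequences of `θ(ξ)=0`. -/
lemma key_facts {n : ℕ} (hn : 1 ≤ n) {a : Fin (3*n+3) → ℝ} (ha : ∀ j, 0 < a j)
    {ξ : ℝ} (hξ : 0 < ξ) (hne : ξ ≠ xistar n a) (hθ : thetaFun n a ξ = 0) :
    0 < F1 n a ξ * Dlt n a ξ ∧ 0 < F3 n a ξ * Dlt n a ξ ∧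
    Pp n a ξ = 0 ∧ 0 < g1f n a ξ ∧ 0 < g3f n a ξ := by
  have hΔ := Dlt_ne ha hne
  have hA := Ap_pos hn ha hξ
  have hC := Cp_pos hn ha hξ
  set A := Ap n a ξ with hA'
  set B := Bp n a ξ with hB'
  set C := Cp n a ξ with hC'
  set Δ := Dlt n a ξ with hΔ'
  set F := F1 n a ξ with hF'
  have hnn : (0:ℝ) ≤ B^2 + 4*A*C := by nlinarith
  set s := Real.sqrt (B^2 + 4*A*C) with hs
  have hs2 : s^2 = B^2 + 4*A*C := Real.sq_sqrt hnn
  have hsB : |B| < s := by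
    have : Real.sqrt (B^2) < s := by
      apply Real.sqrt_lt_sqrt (sq_nonneg B); nlinarith
    rwa [Real.sqrt_sq_eq_abs] at this
  have hBs : 0 < B + s := by
    cases abs_lt.mp hsB with | intro h1 h2 => linarith
  have hth : 2*C*F = Δ*(B+s) := by
    have h0 := hθ
    rw [thetaFun] at h0
    rw [← hF', ← hΔ', ← hB', ← hC', ← hA', ← hs] at h0
    linarith [h0]
  -- F * Δ > 0
  have hFD : 0 < F * Δ := by
    have h2C : (0:ℝ) < 2*C := by linarith
    have : F * Δ = Δ^2 * (B+s) / (2*C) := by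
      rw [eq_div_iff (ne_of_gt h2C)]
      linear_combination Δ * hth
    rw [this]
    positivity
  have hF : F ≠ 0 := by
    intro h; rw [h, zero_mul] at hFD; exact lt_irrefl _ hFD
  -- Pp = 0
  have hPp : Pp n a ξ = 0 := by
    have hsq : (2*C*F)^2 = (Δ*(B+s))^2 := by rw [hth]
    have hz : 4*C*(A*Δ^2 + B*Δ*F - C*F^2) = 0 := by
      linear_combination (-1:ℝ)*hsq + (2*Δ*B)*hth + (-Δ^2)*hs2
    have h4C : (4:ℝ)*C ≠ 0 := by positivity
    rw [Pp, ← hA', ← hB', ← hC', ← hΔ', ← hF']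
    rcases mul_eq_zero.mp hz with h | h
    · exact absurd h h4C
    · linarith
  -- F3 * Δ > 0
  have h3 := av_pos (n := n) ha (j := 3) (by omega)
  have hw1 := om1_pos ha
  have hw3 := om3_pos ha
  have hO6 := Om6_pos hn ha hξ
  have hF3id : om3 n a * (F3 n a ξ * Dlt n a ξ)
      = Om6 n a ξ * (Dlt n a ξ)^2 + av n a 3 * (F1 n a ξ * Dlt n a ξ) := by
    rw [F3, F1, Dlt]
    field_simp
    ring
  have hFD' : 0 < F1 n a ξ * Dlt n a ξ := hFD
  have hΔsq : 0 < (Dlt n a ξ)^2 := by positivity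
  have hF3D : 0 < F3 n a ξ * Dlt n a ξ := by nlinarith
  refine ⟨hFD, hF3D, hPp, ?_, ?_⟩
  · rw [g1f]
    have : F1 n a ξ / Dlt n a ξ = F1 n a ξ * Dlt n a ξ / (Dlt n a ξ)^2 := by
      field_simp
    rw [mul_div_assoc, this]
    positivity
  · rw [g3f]
    have : F3 n a ξ / Dlt n a ξ = F3 n a ξ * Dlt n a ξ / (Dlt n a ξ)^2 := by
      field_simp
    rw [mul_div_assoc, this]
    positivity
lemma gL_apply (n : ℕ) (g : Fin 3 → ℝ) (j : Fin (3*n+3)) :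
    gL n g j = g 0 ^ (Lmat n j 0) * g 1 ^ (Lmat n j 1) * g 2 ^ (Lmat n j 2) := by
  rw [gL, Fin.prod_univ_three]

lemma gL_at_0 (n : ℕ) (g : Fin 3 → ℝ) (h : 0 < 3*n+3) :
    gL n g ⟨0, h⟩ = g 0 * g 1 ^ ((n:ℤ)-1) * (g 2)⁻¹ := by
  rw [gL_apply]
  simp [Lmat]

lemma gL_at_2 (n : ℕ) (g : Fin 3 → ℝ) (h : 2 < 3*n+3) :
    gL n g ⟨2, h⟩ = g 0 * g 1 ^ ((n:ℤ)-2) * (g 2)⁻¹ := by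
  rw [gL_apply]
  simp [Lmat]

lemma gL_at_3k (n : ℕ) (g : Fin 3 → ℝ) {k : ℕ} (hk1 : 1 ≤ k) (h : 3*k < 3*n+3) :
    gL n g ⟨3*k, h⟩ = g 1 ^ ((k:ℤ)-2) * (g 2)⁻¹ := by
  rw [gL_apply]
  have e0 : Lmat n ⟨3*k, h⟩ 0 = 0 := by
    simp only [Lmat, Matrix.of_apply]
    rw [if_neg (by omega), if_neg (by omega), if_neg (by omega), if_neg (by omega)]
    rfl
  have e1 : Lmat n ⟨3*k, h⟩ 1 = (k:ℤ)-2 := by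
    simp only [Lmat, Matrix.of_apply]
    rw [if_neg (by omega), if_neg (by omega), if_neg (by omega), if_neg (by omega)]
    show (((3*k/3 : ℕ) : ℤ)) - 2 = (k:ℤ)-2
    rw [Nat.mul_div_cancel_left k (by norm_num)]
  have e2 : Lmat n ⟨3*k, h⟩ 2 = -1 := by
    simp only [Lmat, Matrix.of_apply]
    rw [if_neg (by omega), if_neg (by omega), if_neg (by omega), if_neg (by omega)]
    rfl
  rw [e0, e1, e2, zpow_zero, zpow_neg_one, one_mul]

lemma gL_at_3k2 (n : ℕ) (g : Fin 3 → ℝ) {k : ℕ} (hk1 : 1 ≤ k) (h : 3*k+2 < 3*n+3) :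
    gL n g ⟨3*k+2, h⟩ = g 1 ^ ((k:ℤ)-2) * (g 2)⁻¹ := by
  rw [gL_apply]
  have e0 : Lmat n ⟨3*k+2, h⟩ 0 = 0 := by
    simp only [Lmat, Matrix.of_apply]
    rw [if_neg (by omega), if_neg (by omega), if_neg (by omega), if_neg (by omega)]
    rfl
  have e1 : Lmat n ⟨3*k+2, h⟩ 1 = (k:ℤ)-2 := by
    simp only [Lmat, Matrix.of_apply]
    rw [if_neg (by omega), if_neg (by omega), if_neg (by omega), if_neg (by omega)]
    show (((3*k+2)/3 : ℕ) : ℤ) - 2 = (k:ℤ)-2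
    congr 1
    omega
  have e2 : Lmat n ⟨3*k+2, h⟩ 2 = -1 := by
    simp only [Lmat, Matrix.of_apply]
    rw [if_neg (by omega), if_neg (by omega), if_neg (by omega), if_neg (by omega)]
    rfl
  rw [e0, e1, e2, zpow_zero, zpow_neg_one, one_mul]

lemma gL_at_3k1 (n : ℕ) (g : Fin 3 → ℝ) {k : ℕ} (h : 3*k+1 < 3*n+3) :
    gL n g ⟨3*k+1, h⟩ = (g 0)⁻¹ * g 1 ^ ((k:ℤ)-(n:ℤ)) := by
  rw [gL_apply]
  rcases Nat.eq_zero_or_pos k with rfl | hk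
  · simp [Lmat]
  · have e0 : Lmat n ⟨3*k+1, h⟩ 0 = -1 := by
      simp only [Lmat, Matrix.of_apply]
      rw [if_neg (by omega), if_neg (by omega), if_neg (by omega), if_pos (by omega)]
      rfl
    have e1 : Lmat n ⟨3*k+1, h⟩ 1 = (k:ℤ)-(n:ℤ) := by
      simp only [Lmat, Matrix.of_apply]
      rw [if_neg (by omega), if_neg (by omega), if_neg (by omega), if_pos (by omega)]
      show (((3*k+1)/3 : ℕ) : ℤ) - (n:ℤ) = (k:ℤ)-(n:ℤ)
      congr 2
      omega
    have e2 : Lmat n ⟨3*k+1, h⟩ 2 = 0 := by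
      simp only [Lmat, Matrix.of_apply]
      rw [if_neg (by omega), if_neg (by omega), if_neg (by omega), if_pos (by omega)]
      rfl
    rw [e0, e1, e2, zpow_zero, zpow_neg_one, mul_one]

lemma av_eq {n : ℕ} (x : Fin (3*n+3) → ℝ) {j : ℕ} (h : j - 1 < 3*n+3) :
    av n x j = x ⟨j-1, h⟩ := by
  rw [av, dif_pos h]

lemma sum_range_mul_three (f : ℕ → ℝ) (m : ℕ) :
    ∑ j ∈ Finset.range (3*m), f j
      = ∑ q ∈ Finset.range m, (f (3*q) + f (3*q+1) + f (3*q+2)) := by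
  induction m with
  | zero => simp
  | succ m ih =>
    rw [Finset.sum_range_succ, ← ih, show 3*(m+1) = (3*m+1+1)+1 by ring,
      Finset.sum_range_succ, Finset.sum_range_succ, Finset.sum_range_succ]
    ring_nf

lemma sum_range_mul_six (f : ℕ → ℝ) (m : ℕ) :
    ∑ j ∈ Finset.range (6*m), f j
      = ∑ q ∈ Finset.range m,
          (f (6*q) + f (6*q+1) + f (6*q+2) + f (6*q+3) + f (6*q+4) + f (6*q+5)) := by
  induction m with
  | zero => simp
  | succ m ih =>
    rw [Finset.sum_range_succ, ← ih, show 6*(m+1) = (6*m+1+1+1+1+1)+1 by ring,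
      Finset.sum_range_succ, Finset.sum_range_succ, Finset.sum_range_succ,
      Finset.sum_range_succ, Finset.sum_range_succ, Finset.sum_range_succ]
    ring_nf
lemma av_succ {n : ℕ} (x : Fin (3*n+3) → ℝ) {j : ℕ} (h : j < 3*n+3) :
    av n x (j+1) = x ⟨j, h⟩ := by
  rw [av, dif_pos (by omega : j+1-1 < 3*n+3)]
  exact congrArg x (Fin.ext (by simp))

lemma Zrow0 {n : ℕ} (x : Fin (3*n+3) → ℝ) :
    (Zmat n).mulVec x 0 = ∑ k ∈ Finset.range (n+1), av n x (1+3*k) := by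
  rw [Matrix.mulVec, dotProduct]
  have step : ∀ j : Fin (3*n+3), Zmat n 0 j * x j
      = (fun t => (if t % 3 = 0 then (1:ℝ) else 0) * av n x (t+1)) (j : ℕ) := by
    intro j
    show _ = (if (j:ℕ) % 3 = 0 then (1:ℝ) else 0) * av n x ((j:ℕ)+1)
    rw [av_succ x j.isLt]
    simp [Zmat]
  rw [Finset.sum_congr rfl (fun j _ => step j),
    Fin.sum_univ_eq_sum_range (fun t => (if t % 3 = 0 then (1:ℝ) else 0) * av n x (t+1)),
    show 3*n+3 = 3*(n+1) by ring, sum_range_mul_three]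
  refine Finset.sum_congr rfl fun q hq => ?_
  have h0 : (3*q) % 3 = 0 := by omega
  have h1 : (3*q+1) % 3 = 1 := by omega
  have h2 : (3*q+2) % 3 = 2 := by omega
  rw [h0, h1, h2]
  norm_num
  rw [show 3*q+1 = 1+3*q by ring]

lemma Zrow2 {n : ℕ} (x : Fin (3*n+3) → ℝ) :
    (Zmat n).mulVec x 2 = ∑ k ∈ Finset.range (n+1), av n x (3+3*k) := by
  rw [Matrix.mulVec, dotProduct]
  have step : ∀ j : Fin (3*n+3), Zmat n 2 j * x j
      = (fun t => (if t % 3 = 2 then (1:ℝ) else 0) * av n x (t+1)) (j : ℕ) := by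
    intro j
    show _ = (if (j:ℕ) % 3 = 2 then (1:ℝ) else 0) * av n x ((j:ℕ)+1)
    rw [av_succ x j.isLt]
    simp [Zmat]
  rw [Finset.sum_congr rfl (fun j _ => step j),
    Fin.sum_univ_eq_sum_range (fun t => (if t % 3 = 2 then (1:ℝ) else 0) * av n x (t+1)),
    show 3*n+3 = 3*(n+1) by ring, sum_range_mul_three]
  refine Finset.sum_congr rfl fun q hq => ?_
  have h0 : (3*q) % 3 = 0 := by omega
  have h1 : (3*q+1) % 3 = 1 := by omega
  have h2 : (3*q+2) % 3 = 2 := by omega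
  rw [h0, h1, h2]
  norm_num
  rw [show 3*q+2+1 = 3+3*q by ring]

lemma Zrow1 {n : ℕ} (x : Fin (3*n+3) → ℝ) :
    (Zmat n).mulVec x 1
      = -(av n x 1) - av n x 3 + ∑ k ∈ Finset.range (n+1), av n x (2+3*k) := by
  rw [Matrix.mulVec, dotProduct]
  have step : ∀ j : Fin (3*n+3), Zmat n 1 j * x j
      = (fun t => (if t % 3 = 1 then (1:ℝ)
          else if t = 0 ∨ t = 2 then -1 else 0) * av n x (t+1)) (j : ℕ) := by
    intro j
    show _ = (if (j:ℕ) % 3 = 1 then (1:ℝ)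
          else if (j:ℕ) = 0 ∨ (j:ℕ) = 2 then -1 else 0) * av n x ((j:ℕ)+1)
    rw [av_succ x j.isLt]
    simp [Zmat]
  rw [Finset.sum_congr rfl (fun j _ => step j),
    Fin.sum_univ_eq_sum_range (fun t => (if t % 3 = 1 then (1:ℝ)
          else if t = 0 ∨ t = 2 then -1 else 0) * av n x (t+1)),
    show 3*n+3 = 3*(n+1) by ring, sum_range_mul_three, Finset.sum_range_succ',
    Finset.sum_range_succ' (fun k => av n x (2+3*k))]
  have hcong : ∀ q ∈ Finset.range n,
      ((if (3*(q+1)) % 3 = 1 then (1:ℝ) else if 3*(q+1) = 0 ∨ 3*(q+1) = 2 then -1 else 0)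
          * av n x (3*(q+1)+1)
        + (if (3*(q+1)+1) % 3 = 1 then (1:ℝ)
            else if 3*(q+1)+1 = 0 ∨ 3*(q+1)+1 = 2 then -1 else 0) * av n x (3*(q+1)+1+1)
        + (if (3*(q+1)+2) % 3 = 1 then (1:ℝ)
            else if 3*(q+1)+2 = 0 ∨ 3*(q+1)+2 = 2 then -1 else 0) * av n x (3*(q+1)+2+1))
      = av n x (2+3*(q+1)) := by
    intro q hq
    rw [if_neg (by omega), if_neg (by omega), if_pos (by omega),
      if_neg (by omega), if_neg (by omega)]
    rw [show 3*(q+1)+1+1 = 2+3*(q+1) by ring]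
    ring
  rw [Finset.sum_congr rfl hcong]
  norm_num
  ring
lemma Om4_eq {n : ℕ} (a : Fin (3*n+3) → ℝ) (ξ : ℝ) :
    Om4 n a ξ = ∑ k ∈ Finset.range n, av n a (1+3*(k+1)) * ξ^k := by
  rw [Om4, ← Finset.Ico_add_one_right_eq_Icc, Finset.sum_Ico_eq_sum_range]
  refine Finset.sum_congr (by norm_num) fun k hk => ?_
  rw [show 1+k = k+1 by ring, Nat.add_sub_cancel]

lemma Om6_eq {n : ℕ} (a : Fin (3*n+3) → ℝ) (ξ : ℝ) :
    Om6 n a ξ = ∑ k ∈ Finset.range n, av n a (3+3*(k+1)) * ξ^k := by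
  rw [Om6, ← Finset.Ico_add_one_right_eq_Icc, Finset.sum_Ico_eq_sum_range]
  refine Finset.sum_congr (by norm_num) fun k hk => ?_
  rw [show 1+k = k+1 by ring, Nat.add_sub_cancel]

section ScalarIdentities
variable {n : ℕ} {a : Fin (3*n+3) → ℝ} {ξ : ℝ}

lemma idI (ha : ∀ j, 0 < a j) :
    av n a 1 * ξ * F1 n a ξ + Om4 n a ξ * Dlt n a ξ = om1 n a * F3 n a ξ := by
  have hw1 : om1 n a ≠ 0 := ne_of_gt (om1_pos ha)
  have hw3 : om3 n a ≠ 0 := ne_of_gt (om3_pos ha)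
  rw [F1, F3, Dlt]
  field_simp
  ring

lemma idIII (ha : ∀ j, 0 < a j) :
    av n a 3 * F1 n a ξ + Om6 n a ξ * Dlt n a ξ = om3 n a * F3 n a ξ := by
  have hw1 : om1 n a ≠ 0 := ne_of_gt (om1_pos ha)
  have hw3 : om3 n a ≠ 0 := ne_of_gt (om3_pos ha)
  rw [F1, F3, Dlt]
  field_simp
  ring

lemma g1_mul (hξ' : ξ ≠ 0) :
    g1f n a ξ * ξ^((n:ℤ)-1) = F1 n a ξ / Dlt n a ξ := by
  rw [g1f, div_mul_eq_mul_div, mul_right_comm, ← zpow_add₀ hξ']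
  norm_num

lemma g3_inv (hξ' : ξ ≠ 0) (hΔ : Dlt n a ξ ≠ 0) (hF3 : F3 n a ξ ≠ 0) :
    (g3f n a ξ)⁻¹ = ξ * Dlt n a ξ / F3 n a ξ := by
  rw [g3f]
  field_simp

lemma scalar1 (ha : ∀ j, 0 < a j) (hξ : 0 < ξ)
    (hΔ : Dlt n a ξ ≠ 0) (hF3 : F3 n a ξ ≠ 0) :
    g1f n a ξ * ξ^((n:ℤ)-1) * (g3f n a ξ)⁻¹ * av n a 1
      + Om4 n a ξ * (ξ⁻¹ * (g3f n a ξ)⁻¹) = om1 n a := by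
  have hξ' : ξ ≠ 0 := ne_of_gt hξ
  rw [g1_mul hξ', g3_inv hξ' hΔ hF3]
  field_simp
  linear_combination idI (ξ := ξ) ha

lemma scalar3 (ha : ∀ j, 0 < a j) (hξ : 0 < ξ)
    (hΔ : Dlt n a ξ ≠ 0) (hF3 : F3 n a ξ ≠ 0) :
    g1f n a ξ * ξ^((n:ℤ)-2) * (g3f n a ξ)⁻¹ * av n a 3
      + Om6 n a ξ * (ξ⁻¹ * (g3f n a ξ)⁻¹) = om3 n a := by
  have hξ' : ξ ≠ 0 := ne_of_gt hξ
  have e2 : g1f n a ξ * ξ^((n:ℤ)-2) = ξ⁻¹ * (F1 n a ξ / Dlt n a ξ) := by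
    rw [g1f, div_mul_eq_mul_div, mul_right_comm, ← zpow_add₀ hξ']
    rw [show (1:ℤ) - n + ((n:ℤ)-2) = -1 by ring, zpow_neg_one]
    ring
  rw [e2, g3_inv hξ' hΔ hF3]
  field_simp
  linear_combination idIII (ξ := ξ) ha
end ScalarIdentities
section Scalar2
variable {n : ℕ} {a : Fin (3*n+3) → ℝ} {ξ : ℝ}

lemma hG_of_Pp (ha : ∀ j, 0 < a j) (hPp : Pp n a ξ = 0) :
    Dlt n a ξ * Om2 n a ξ * F3 n a ξ
      - (av n a 1 * ξ + av n a 3) * ξ * (F1 n a ξ)^2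
      - om2 n a * ξ * F1 n a ξ * F3 n a ξ = 0 := by
  have hw1 : om1 n a ≠ 0 := ne_of_gt (om1_pos ha)
  have hw3 : om3 n a ≠ 0 := ne_of_gt (om3_pos ha)
  have hws : om1 n a + om3 n a ≠ 0 := by
    have := om1_pos ha; have := om3_pos ha; positivity
  have hkey : (om1 n a + om3 n a) *
      (Dlt n a ξ * Om2 n a ξ * F3 n a ξ
        - (av n a 1 * ξ + av n a 3) * ξ * (F1 n a ξ)^2
        - om2 n a * ξ * F1 n a ξ * F3 n a ξ) = Pp n a ξ := by
    rw [Pp, Ap, Bp, Cp, F3, F1, Dlt]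
    field_simp
    ring
  rw [hPp] at hkey
  rcases mul_eq_zero.mp hkey with h | h
  · exact absurd h hws
  · exact h

lemma g1f_mul_n2 (hξ' : ξ ≠ 0) :
    g1f n a ξ * ξ^((n:ℤ)-2) = ξ⁻¹ * (F1 n a ξ / Dlt n a ξ) := by
  rw [g1f, div_mul_eq_mul_div, mul_right_comm, ← zpow_add₀ hξ']
  rw [show (1:ℤ) - n + ((n:ℤ)-2) = -1 by ring, zpow_neg_one]
  ring

lemma g1_inv (hξ' : ξ ≠ 0) (hΔ : Dlt n a ξ ≠ 0) (hF1 : F1 n a ξ ≠ 0) :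
    ξ^(-(n:ℤ)) * (g1f n a ξ)⁻¹ = ξ⁻¹ * (Dlt n a ξ / F1 n a ξ) := by
  have hmul : g1f n a ξ * (ξ^((n:ℤ)-1) * (Dlt n a ξ / F1 n a ξ)) = 1 := by
    rw [g1f]
    field_simp
    rw [← zpow_add₀ hξ', show (1:ℤ) - n + ((n:ℤ)-1) = 0 by ring, zpow_zero]
  rw [inv_eq_of_mul_eq_one_right hmul,
    show ξ^(-(n:ℤ)) * (ξ^((n:ℤ)-1) * (Dlt n a ξ / F1 n a ξ))
      = (ξ^(-(n:ℤ)) * ξ^((n:ℤ)-1)) * (Dlt n a ξ / F1 n a ξ) by ring,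
    ← zpow_add₀ hξ', show -(n:ℤ) + ((n:ℤ)-1) = -1 by ring, zpow_neg_one]

lemma scalar2 (ha : ∀ j, 0 < a j) (hξ : 0 < ξ)
    (hΔ : Dlt n a ξ ≠ 0) (hF1 : F1 n a ξ ≠ 0) (hF3 : F3 n a ξ ≠ 0)
    (hPp : Pp n a ξ = 0) :
    -(g1f n a ξ * ξ^((n:ℤ)-1) * (g3f n a ξ)⁻¹ * av n a 1)
      - g1f n a ξ * ξ^((n:ℤ)-2) * (g3f n a ξ)⁻¹ * av n a 3
      + Om2 n a ξ * (ξ^(-(n:ℤ)) * (g1f n a ξ)⁻¹) = om2 n a := by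
  have hξ' : ξ ≠ 0 := ne_of_gt hξ
  have hG := hG_of_Pp ha hPp
  rw [g1_mul hξ', g1f_mul_n2 hξ', g3_inv hξ' hΔ hF3, g1_inv hξ' hΔ hF1]
  field_simp
  linear_combination hG

end Scalar2
section Conservation
variable {n : ℕ} {a : Fin (3*n+3) → ℝ} {ξ : ℝ}

lemma bOf_av {k : ℕ} (h : k < 3*n+3) :
    av n (bOf n a ξ) (k+1)
      = gL n ![g1f n a ξ, ξ, g3f n a ξ] ⟨k,h⟩ * av n a (k+1) := by
  rw [av_succ _ h, av_succ _ h]; rfl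

lemma gvec0 : (![g1f n a ξ, ξ, g3f n a ξ] : Fin 3 → ℝ) 0 = g1f n a ξ := rfl
lemma gvec1 : (![g1f n a ξ, ξ, g3f n a ξ] : Fin 3 → ℝ) 1 = ξ := rfl
lemma gvec2 : (![g1f n a ξ, ξ, g3f n a ξ] : Fin 3 → ℝ) 2 = g3f n a ξ := rfl

lemma Om4_eq' (a : Fin (3*n+3) → ℝ) (ξ : ℝ) :
    Om4 n a ξ = ∑ k ∈ Finset.range n, av n a (3*(k+1)+1) * ξ^k := by
  rw [Om4_eq]
  exact Finset.sum_congr rfl fun k _ => by rw [show 1+3*(k+1) = 3*(k+1)+1 by ring]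

lemma Om6_eq' (a : Fin (3*n+3) → ℝ) (ξ : ℝ) :
    Om6 n a ξ = ∑ k ∈ Finset.range n, av n a (3*(k+1)+2+1) * ξ^k := by
  rw [Om6_eq]
  exact Finset.sum_congr rfl fun k _ => by rw [show 3+3*(k+1) = 3*(k+1)+2+1 by ring]

lemma cons_row0 (ha : ∀ j, 0 < a j) (hξ : 0 < ξ)
    (hΔ : Dlt n a ξ ≠ 0) (hF3 : F3 n a ξ ≠ 0) :
    (Zmat n).mulVec (bOf n a ξ) 0 = (Zmat n).mulVec a 0 := by
  have hξ' : ξ ≠ 0 := ne_of_gt hξ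
  rw [Zrow0, Zrow0,
    Finset.sum_range_succ' (fun k => av n (bOf n a ξ) (1+3*k)) n,
    Finset.sum_range_succ' (fun k => av n a (1+3*k)) n]
  have hstep : ∀ k ∈ Finset.range n,
      av n (bOf n a ξ) (1+3*(k+1))
        = (av n a (3*(k+1)+1) * ξ^k) * (ξ⁻¹ * (g3f n a ξ)⁻¹) := by
    intro k hk
    have hk' : k < n := Finset.mem_range.mp hk
    have hb : 3*(k+1) < 3*n+3 := by omega
    rw [show 1+3*(k+1) = 3*(k+1)+1 by ring, bOf_av hb, gL_at_3k n _ (by omega) hb,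
      gvec1, gvec2,
      show (((k+1:ℕ)):ℤ)-2 = (k:ℤ)-1 by push_cast; ring,
      zpow_sub₀ hξ', zpow_one, zpow_natCast]
    ring
  rw [Finset.sum_congr rfl hstep, ← Finset.sum_mul, ← Om4_eq']
  have h0 : av n (bOf n a ξ) (1+3*0)
      = g1f n a ξ * ξ^((n:ℤ)-1) * (g3f n a ξ)⁻¹ * av n a 1 := by
    show av n (bOf n a ξ) (0+1) = _
    rw [bOf_av (by omega : 0 < 3*n+3), gL_at_0, gvec0, gvec1, gvec2]
  rw [h0]
  have := scalar1 (n := n) (a := a) (ξ := ξ) ha hξ hΔ hF3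
  rw [om1, Finset.sum_range_succ' (fun k => av n a (1+3*k)) n] at this
  linarith [this]

lemma cons_row2 (ha : ∀ j, 0 < a j) (hξ : 0 < ξ)
    (hΔ : Dlt n a ξ ≠ 0) (hF3 : F3 n a ξ ≠ 0) :
    (Zmat n).mulVec (bOf n a ξ) 2 = (Zmat n).mulVec a 2 := by
  have hξ' : ξ ≠ 0 := ne_of_gt hξ
  rw [Zrow2, Zrow2,
    Finset.sum_range_succ' (fun k => av n (bOf n a ξ) (3+3*k)) n,
    Finset.sum_range_succ' (fun k => av n a (3+3*k)) n]
  have hstep : ∀ k ∈ Finset.range n,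
      av n (bOf n a ξ) (3+3*(k+1))
        = (av n a (3*(k+1)+2+1) * ξ^k) * (ξ⁻¹ * (g3f n a ξ)⁻¹) := by
    intro k hk
    have hk' : k < n := Finset.mem_range.mp hk
    have hb : 3*(k+1)+2 < 3*n+3 := by omega
    rw [show 3+3*(k+1) = 3*(k+1)+2+1 by ring, bOf_av hb, gL_at_3k2 n _ (by omega) hb,
      gvec1, gvec2,
      show (((k+1:ℕ)):ℤ)-2 = (k:ℤ)-1 by push_cast; ring,
      zpow_sub₀ hξ', zpow_one, zpow_natCast]
    ring
  rw [Finset.sum_congr rfl hstep, ← Finset.sum_mul, ← Om6_eq']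
  have h0 : av n (bOf n a ξ) (3+3*0)
      = g1f n a ξ * ξ^((n:ℤ)-2) * (g3f n a ξ)⁻¹ * av n a 3 := by
    show av n (bOf n a ξ) (2+1) = _
    rw [bOf_av (by omega : 2 < 3*n+3), gL_at_2, gvec0, gvec1, gvec2]
  rw [h0]
  have := scalar3 (n := n) (a := a) (ξ := ξ) ha hξ hΔ hF3
  rw [om3, Finset.sum_range_succ' (fun k => av n a (3+3*k)) n] at this
  linarith [this]

lemma cons_row1 (ha : ∀ j, 0 < a j) (hξ : 0 < ξ)
    (hΔ : Dlt n a ξ ≠ 0) (hF1 : F1 n a ξ ≠ 0) (hF3 : F3 n a ξ ≠ 0)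
    (hPp : Pp n a ξ = 0) :
    (Zmat n).mulVec (bOf n a ξ) 1 = (Zmat n).mulVec a 1 := by
  have hξ' : ξ ≠ 0 := ne_of_gt hξ
  rw [Zrow1, Zrow1]
  have hstep : ∀ k ∈ Finset.range (n+1),
      av n (bOf n a ξ) (2+3*k)
        = (av n a (2+3*k) * ξ^k) * (ξ^(-(n:ℤ)) * (g1f n a ξ)⁻¹) := by
    intro k hk
    have hk' : k < n+1 := Finset.mem_range.mp hk
    have hb : 3*k+1 < 3*n+3 := by omega
    rw [show 2+3*k = 3*k+1+1 by ring, bOf_av hb, gL_at_3k1 n _ hb, gvec0, gvec1,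
      zpow_sub₀ hξ', zpow_natCast, div_eq_mul_inv, ← zpow_neg]
    ring
  rw [Finset.sum_congr rfl hstep, ← Finset.sum_mul, ← Om2]
  have h1 : av n (bOf n a ξ) 1
      = g1f n a ξ * ξ^((n:ℤ)-1) * (g3f n a ξ)⁻¹ * av n a 1 := by
    show av n (bOf n a ξ) (0+1) = _
    rw [bOf_av (by omega : 0 < 3*n+3), gL_at_0, gvec0, gvec1, gvec2]
  have h3 : av n (bOf n a ξ) 3
      = g1f n a ξ * ξ^((n:ℤ)-2) * (g3f n a ξ)⁻¹ * av n a 3 := by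
    show av n (bOf n a ξ) (2+1) = _
    rw [bOf_av (by omega : 2 < 3*n+3), gL_at_2, gvec0, gvec1, gvec2]
  rw [h1, h3]
  have := scalar2 (n := n) (a := a) (ξ := ξ) ha hξ hΔ hF1 hF3 hPp
  rw [om2] at this
  linarith [this]

lemma conservation (ha : ∀ j, 0 < a j) (hξ : 0 < ξ)
    (hΔ : Dlt n a ξ ≠ 0) (hF1 : F1 n a ξ ≠ 0) (hF3 : F3 n a ξ ≠ 0)
    (hPp : Pp n a ξ = 0) :
    (Zmat n).mulVec (bOf n a ξ) = (Zmat n).mulVec a := by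
  funext r
  fin_cases r
  · exact cons_row0 ha hξ hΔ hF3
  · exact cons_row1 ha hξ hΔ hF1 hF3 hPp
  · exact cons_row2 ha hξ hΔ hF3

end Conservation
section Steady

lemma vec6_0 {α : Type*} (v0 v1 v2 v3 v4 v5 : α) (h : (0:ℕ) < 6) :
    (![v0,v1,v2,v3,v4,v5]) ⟨0,h⟩ = v0 := rfl
lemma vec6_1 {α : Type*} (v0 v1 v2 v3 v4 v5 : α) (h : (1:ℕ) < 6) :
    (![v0,v1,v2,v3,v4,v5]) ⟨1,h⟩ = v1 := rfl
lemma vec6_2 {α : Type*} (v0 v1 v2 v3 v4 v5 : α) (h : (2:ℕ) < 6) :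
    (![v0,v1,v2,v3,v4,v5]) ⟨2,h⟩ = v2 := rfl
lemma vec6_3 {α : Type*} (v0 v1 v2 v3 v4 v5 : α) (h : (3:ℕ) < 6) :
    (![v0,v1,v2,v3,v4,v5]) ⟨3,h⟩ = v3 := rfl
lemma vec6_4 {α : Type*} (v0 v1 v2 v3 v4 v5 : α) (h : (4:ℕ) < 6) :
    (![v0,v1,v2,v3,v4,v5]) ⟨4,h⟩ = v4 := rfl
lemma vec6_5 {α : Type*} (v0 v1 v2 v3 v4 v5 : α) (h : (5:ℕ) < 6) :
    (![v0,v1,v2,v3,v4,v5]) ⟨5,h⟩ = v5 := rfl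

lemma SE_zero (n : ℕ) : Smat n * Emat n = 0 := by
  ext m c
  rw [Matrix.mul_apply, Matrix.zero_apply]
  set F : ℕ → ℝ := fun t =>
    (![e (3*n+3) (1+3*(t/6+1)) - e (3*n+3) 1 - e (3*n+3) (3*(t/6+1)-1),
       e (3*n+3) 1 + e (3*n+3) (3*(t/6+1)-1) - e (3*n+3) (1+3*(t/6+1)),
       e (3*n+3) 1 + e (3*n+3) (2+3*(t/6+1)) - e (3*n+3) (1+3*(t/6+1)),
       e (3*n+3) (3+3*(t/6+1)) - e (3*n+3) 3 - e (3*n+3) (2+3*(t/6+1)),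
       e (3*n+3) 3 + e (3*n+3) (2+3*(t/6+1)) - e (3*n+3) (3+3*(t/6+1)),
       e (3*n+3) 3 + e (3*n+3) (3*(t/6+1)-1) - e (3*n+3) (3+3*(t/6+1))]
      ⟨t % 6, Nat.mod_lt _ (by norm_num)⟩) m *
    (if t/6 = (c:ℕ)/3 then
      E0 ⟨t % 6, Nat.mod_lt _ (by norm_num)⟩ ⟨(c:ℕ) % 3, Nat.mod_lt _ (by norm_num)⟩ else 0)
    with hF
  have step : ∀ r : Fin (6*n), Smat n m r * Emat n r c = F (r:ℕ) := fun r => rfl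
  rw [Finset.sum_congr rfl (fun r _ => step r), Fin.sum_univ_eq_sum_range F (6*n),
    sum_range_mul_six]
  refine Finset.sum_eq_zero fun q hq => ?_
  have d0 : (6*q)/6 = q := by omega
  have d1 : (6*q+1)/6 = q := by omega
  have d2 : (6*q+2)/6 = q := by omega
  have d3 : (6*q+3)/6 = q := by omega
  have d4 : (6*q+4)/6 = q := by omega
  have d5 : (6*q+5)/6 = q := by omega
  have m0 : (6*q)%6 = 0 := by omega
  have m1 : (6*q+1)%6 = 1 := by omega
  have m2 : (6*q+2)%6 = 2 := by omega
  have m3 : (6*q+3)%6 = 3 := by omega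
  have m4 : (6*q+4)%6 = 4 := by omega
  have m5 : (6*q+5)%6 = 5 := by omega
  simp only [hF, d0, d1, d2, d3, d4, d5, m0, m1, m2, m3, m4, m5,
    vec6_0, vec6_1, vec6_2, vec6_3, vec6_4, vec6_5]
  rcases eq_or_ne q ((c:ℕ)/3) with hqc | hqc
  · rw [if_pos hqc, if_pos hqc, if_pos hqc, if_pos hqc, if_pos hqc, if_pos hqc]
    have hc3 : (c:ℕ)%3 = 0 ∨ (c:ℕ)%3 = 1 ∨ (c:ℕ)%3 = 2 := by omega
    have hE0 : ∀ (h0 : (0:ℕ) < 3), E0 ⟨0, by norm_num⟩ ⟨0,h0⟩ = 1 := fun _ => rfl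
    rcases hc3 with hc | hc | hc <;>
      simp only [hc] <;>
      simp only [E0, vec6_0, vec6_1, vec6_2, vec6_3, vec6_4, vec6_5,
        Matrix.cons_val_zero, Matrix.cons_val_one, Matrix.head_cons,
        show ((⟨0, by norm_num⟩ : Fin 3)) = (0 : Fin 3) from rfl,
        show ((⟨1, by norm_num⟩ : Fin 3)) = (1 : Fin 3) from rfl,
        show ((⟨2, by norm_num⟩ : Fin 3)) = (2 : Fin 3) from rfl,
        Matrix.cons_val_two, Matrix.tail_cons, Pi.add_apply, Pi.sub_apply] <;>
      ring
  · rw [if_neg hqc, if_neg hqc, if_neg hqc, if_neg hqc, if_neg hqc, if_neg hqc]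
    ring

end Steady
section PhiPart
variable {n : ℕ} {a : Fin (3*n+3) → ℝ} {ξ : ℝ}

lemma prod_pow_eN {N : ℕ} (x : Fin N → ℝ) {p j : ℕ} (hp : j+1 = p) (h : j < N) :
    ∏ m, x m ^ (eN N p m) = x ⟨j, h⟩ := by
  have hterm : ∀ m : Fin N, x m ^ (eN N p m) = if m = ⟨j,h⟩ then x m else 1 := by
    intro m
    rw [eN]
    by_cases hm : (m:ℕ)+1 = p
    · rw [if_pos hm, pow_one, if_pos (by apply Fin.ext; simp only [Fin.val_mk]; omega)]
    · rw [if_neg hm, pow_zero, if_neg]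
      intro hc
      apply hm
      rw [hc]
      simp only [Fin.val_mk]
      omega
  rw [Finset.prod_congr rfl fun m _ => hterm m]
  rw [Finset.prod_ite_eq' Finset.univ (⟨j,h⟩ : Fin N) x]
  simp

lemma Phi_pos (ha : ∀ j, 0 < a j) (r : Fin (6*n)) : 0 < Phi n a r :=
  Finset.prod_pos fun m _ => pow_pos (ha m) _

lemma Phi_bOf (r : Fin (6*n)) :
    Phi n (bOf n a ξ) r
      = (∏ m, (gL n ![g1f n a ξ, ξ, g3f n a ξ] m) ^ (Ymat n m r)) * Phi n a r := by
  rw [Phi, Phi, ← Finset.prod_mul_distrib]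
  exact Finset.prod_congr rfl fun m _ => by
    show (gL n ![g1f n a ξ, ξ, g3f n a ξ] m * a m) ^ _ = _
    rw [mul_pow]

lemma PhiGL (hξ : 0 < ξ) (hg1 : g1f n a ξ ≠ 0) (r : Fin (6*n)) :
    ∏ m, (gL n ![g1f n a ξ, ξ, g3f n a ξ] m) ^ (Ymat n m r)
      = ξ^((((r:ℕ)/6 : ℕ):ℤ)-1) * (g3f n a ξ)⁻¹ := by
  have hξ' : ξ ≠ 0 := ne_of_gt hξ
  set g : Fin 3 → ℝ := ![g1f n a ξ, ξ, g3f n a ξ] with hg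
  have hrn := r.isLt
  have hi : (r:ℕ)/6 < n := by omega
  set i : ℕ := (r:ℕ)/6 with hidef
  have hs6 : (r:ℕ)%6 = 0 ∨ (r:ℕ)%6 = 1 ∨ (r:ℕ)%6 = 2 ∨ (r:ℕ)%6 = 3 ∨
      (r:ℕ)%6 = 4 ∨ (r:ℕ)%6 = 5 := by omega
  have hb0 : (0:ℕ) < 3*n+3 := by omega
  have hb2 : (2:ℕ) < 3*n+3 := by omega
  have hb1 : 3*i+1 < 3*n+3 := by omega
  have hb3k : 3*(i+1) < 3*n+3 := by omega
  have hb3k1 : 3*(i+1)+1 < 3*n+3 := by omega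
  have hb3k2 : 3*(i+1)+2 < 3*n+3 := by omega
  have hcolval : ∀ m : Fin (3*n+3), Ymat n m r =
      (![eN (3*n+3) 1 + eN (3*n+3) (3*(i+1)-1),
        eN (3*n+3) (1+3*(i+1)),
        eN (3*n+3) (1+3*(i+1)),
        eN (3*n+3) 3 + eN (3*n+3) (2+3*(i+1)),
        eN (3*n+3) (3+3*(i+1)),
        eN (3*n+3) (3+3*(i+1))]
        ⟨(r:ℕ) % 6, Nat.mod_lt _ (by norm_num)⟩) m := fun m => rfl
  rcases hs6 with hs | hs | hs | hs | hs | hs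
  · -- column e_1 + e_{3i+2}
    have hcol : ∀ m : Fin (3*n+3), Ymat n m r
        = eN (3*n+3) 1 m + eN (3*n+3) (3*(i+1)-1) m := by
      intro m
      rw [hcolval m]
      simp only [hs, vec6_0]
      rfl
    calc ∏ m, (gL n g m) ^ (Ymat n m r)
        = (∏ m, (gL n g m) ^ (eN (3*n+3) 1 m))
          * (∏ m, (gL n g m) ^ (eN (3*n+3) (3*(i+1)-1) m)) := by
          rw [← Finset.prod_mul_distrib]
          exact Finset.prod_congr rfl fun m _ => by rw [hcol m, pow_add]
      _ = gL n g ⟨0, hb0⟩ * gL n g ⟨3*i+1, hb1⟩ := by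
          rw [prod_pow_eN _ (by omega) hb0, prod_pow_eN _ (by omega) hb1]
      _ = ξ^((i:ℤ)-1) * (g3f n a ξ)⁻¹ := by
          rw [gL_at_0, gL_at_3k1, hg, gvec0, gvec1, gvec2]
          rw [show g1f n a ξ * ξ^((n:ℤ)-1) * (g3f n a ξ)⁻¹
                * ((g1f n a ξ)⁻¹ * ξ^((i:ℤ)-(n:ℤ)))
              = (g1f n a ξ * (g1f n a ξ)⁻¹) * (ξ^((n:ℤ)-1) * ξ^((i:ℤ)-(n:ℤ)))
                * (g3f n a ξ)⁻¹ by ring,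
            mul_inv_cancel₀ hg1, ← zpow_add₀ hξ',
            show (n:ℤ)-1 + ((i:ℤ)-(n:ℤ)) = (i:ℤ)-1 by ring, one_mul]
  · have hcol : ∀ m : Fin (3*n+3), Ymat n m r = eN (3*n+3) (1+3*(i+1)) m := by
      intro m
      rw [hcolval m]
      simp only [hs, vec6_1]
    calc ∏ m, (gL n g m) ^ (Ymat n m r)
        = ∏ m, (gL n g m) ^ (eN (3*n+3) (1+3*(i+1)) m) :=
          Finset.prod_congr rfl fun m _ => by rw [hcol m]
      _ = gL n g ⟨3*(i+1), hb3k⟩ := prod_pow_eN _ (by omega) hb3k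
      _ = ξ^((i:ℤ)-1) * (g3f n a ξ)⁻¹ := by
          rw [gL_at_3k n g (by omega) hb3k, hg, gvec1, gvec2,
            show (((i+1:ℕ)):ℤ)-2 = (i:ℤ)-1 by push_cast; ring]
  · have hcol : ∀ m : Fin (3*n+3), Ymat n m r = eN (3*n+3) (1+3*(i+1)) m := by
      intro m
      rw [hcolval m]
      simp only [hs, vec6_2]
    calc ∏ m, (gL n g m) ^ (Ymat n m r)
        = ∏ m, (gL n g m) ^ (eN (3*n+3) (1+3*(i+1)) m) :=
          Finset.prod_congr rfl fun m _ => by rw [hcol m]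
      _ = gL n g ⟨3*(i+1), hb3k⟩ := prod_pow_eN _ (by omega) hb3k
      _ = ξ^((i:ℤ)-1) * (g3f n a ξ)⁻¹ := by
          rw [gL_at_3k n g (by omega) hb3k, hg, gvec1, gvec2,
            show (((i+1:ℕ)):ℤ)-2 = (i:ℤ)-1 by push_cast; ring]
  · -- column e_3 + e_{2+3(i+1)}
    have hcol : ∀ m : Fin (3*n+3), Ymat n m r
        = eN (3*n+3) 3 m + eN (3*n+3) (2+3*(i+1)) m := by
      intro m
      rw [hcolval m]
      simp only [hs, vec6_3]
      rfl
    calc ∏ m, (gL n g m) ^ (Ymat n m r)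
        = (∏ m, (gL n g m) ^ (eN (3*n+3) 3 m))
          * (∏ m, (gL n g m) ^ (eN (3*n+3) (2+3*(i+1)) m)) := by
          rw [← Finset.prod_mul_distrib]
          exact Finset.prod_congr rfl fun m _ => by rw [hcol m, pow_add]
      _ = gL n g ⟨2, hb2⟩ * gL n g ⟨3*(i+1)+1, hb3k1⟩ := by
          rw [prod_pow_eN _ (by omega) hb2, prod_pow_eN _ (by omega) hb3k1]
      _ = ξ^((i:ℤ)-1) * (g3f n a ξ)⁻¹ := by
          rw [gL_at_2, gL_at_3k1, hg, gvec0, gvec1, gvec2]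
          rw [show g1f n a ξ * ξ^((n:ℤ)-2) * (g3f n a ξ)⁻¹
                * ((g1f n a ξ)⁻¹ * ξ^(((i+1:ℕ):ℤ)-(n:ℤ)))
              = (g1f n a ξ * (g1f n a ξ)⁻¹) * (ξ^((n:ℤ)-2) * ξ^(((i+1:ℕ):ℤ)-(n:ℤ)))
                * (g3f n a ξ)⁻¹ by ring,
            mul_inv_cancel₀ hg1, ← zpow_add₀ hξ',
            show (n:ℤ)-2 + (((i+1:ℕ):ℤ)-(n:ℤ)) = (i:ℤ)-1 by push_cast; ring, one_mul]
  · have hcol : ∀ m : Fin (3*n+3), Ymat n m r = eN (3*n+3) (3+3*(i+1)) m := by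
      intro m
      rw [hcolval m]
      simp only [hs, vec6_4]
    calc ∏ m, (gL n g m) ^ (Ymat n m r)
        = ∏ m, (gL n g m) ^ (eN (3*n+3) (3+3*(i+1)) m) :=
          Finset.prod_congr rfl fun m _ => by rw [hcol m]
      _ = gL n g ⟨3*(i+1)+2, hb3k2⟩ := prod_pow_eN _ (by omega) hb3k2
      _ = ξ^((i:ℤ)-1) * (g3f n a ξ)⁻¹ := by
          rw [gL_at_3k2 n g (by omega) hb3k2, hg, gvec1, gvec2,
            show (((i+1:ℕ)):ℤ)-2 = (i:ℤ)-1 by push_cast; ring]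
  · have hcol : ∀ m : Fin (3*n+3), Ymat n m r = eN (3*n+3) (3+3*(i+1)) m := by
      intro m
      rw [hcolval m]
      simp only [hs, vec6_5]
    calc ∏ m, (gL n g m) ^ (Ymat n m r)
        = ∏ m, (gL n g m) ^ (eN (3*n+3) (3+3*(i+1)) m) :=
          Finset.prod_congr rfl fun m _ => by rw [hcol m]
      _ = gL n g ⟨3*(i+1)+2, hb3k2⟩ := prod_pow_eN _ (by omega) hb3k2
      _ = ξ^((i:ℤ)-1) * (g3f n a ξ)⁻¹ := by
          rw [gL_at_3k2 n g (by omega) hb3k2, hg, gvec1, gvec2,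
            show (((i+1:ℕ)):ℤ)-2 = (i:ℤ)-1 by push_cast; ring]

end PhiPart
section Final
variable {n : ℕ} {a : Fin (3*n+3) → ℝ} {ξ : ℝ}

lemma steady_of (ha : ∀ j, 0 < a j) {lam : Fin (3*n) → ℝ}
    (hξ : 0 < ξ) (hg1 : g1f n a ξ ≠ 0) :
    isSteady n (kappaOf n a lam) (bOf n a ξ) := by
  rw [isSteady]
  have hv : (fun r => kappaOf n a lam r * Phi n (bOf n a ξ) r)
      = (Emat n).mulVec
          (fun c => ξ^((((c:ℕ)/3 : ℕ):ℤ)-1) * (g3f n a ξ)⁻¹ * lam c) := by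
    funext r
    have hPa : Phi n a r ≠ 0 := ne_of_gt (Phi_pos ha r)
    rw [kappaOf, Phi_bOf, PhiGL hξ hg1 r, div_mul_eq_mul_div,
      show (Emat n).mulVec lam r * (ξ^((((r:ℕ)/6:ℕ):ℤ)-1) * (g3f n a ξ)⁻¹ * Phi n a r)
        = (ξ^((((r:ℕ)/6:ℕ):ℤ)-1) * (g3f n a ξ)⁻¹ * (Emat n).mulVec lam r) * Phi n a r
        by ring,
      mul_div_cancel_right₀ _ hPa,
      Matrix.mulVec, Matrix.mulVec, dotProduct, dotProduct,
      Finset.mul_sum]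
    refine Finset.sum_congr rfl fun cc _ => ?_
    rcases eq_or_ne ((r:ℕ)/6) ((cc:ℕ)/3) with hqc | hqc
    · rw [← hqc]
      ring
    · have hE : Emat n r cc = 0 := by
        rw [Emat, Matrix.of_apply, if_neg hqc]
      rw [hE]
      ring
  rw [hv, Matrix.mulVec_mulVec, SE_zero, Matrix.zero_mulVec]

lemma bOf_pos (ha : ∀ j, 0 < a j) (hξ : 0 < ξ)
    (hg1 : 0 < g1f n a ξ) (hg3 : 0 < g3f n a ξ) :
    ∀ j, 0 < bOf n a ξ j := by
  intro j
  refine mul_pos ?_ (ha j)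
  rw [gL_apply, gvec0, gvec1, gvec2]
  exact mul_pos (mul_pos (zpow_pos hg1 _) (zpow_pos hξ _)) (zpow_pos hg3 _)

lemma bOf_at_3k {k : ℕ} (hk1 : 1 ≤ k) (h : 3*k < 3*n+3) :
    bOf n a ξ ⟨3*k, h⟩ = ξ^((k:ℤ)-2) * (g3f n a ξ)⁻¹ * a ⟨3*k, h⟩ := by
  show gL n ![g1f n a ξ, ξ, g3f n a ξ] ⟨3*k,h⟩ * a ⟨3*k,h⟩ = _
  rw [gL_at_3k n _ hk1 h, gvec1, gvec2]

end Final

/-- (Determining equation.) If `ξ > 0`, `ξ ≠ ξ*` and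
`θ(ξ) = 0`, then `g = (g1(ξ), ξ, g3(ξ))` is positive and `b = diag(g^L) a`
is a positive steady state of `ẋ = S diag(κ(a,λ)) Φ(x)` with `Z b = Z a`;
if `ξ ≠ 1` then `b ≠ a`; and distinct such zeros of `θ` yield distinct
steady states. -/
theorem determining_equation (n : ℕ) (hn : 2 ≤ n)
    (a : Fin (3*n+3) → ℝ) (ha : ∀ j, 0 < a j)
    (lam : Fin (3*n) → ℝ) (hlam : ∀ c, 0 < lam c)
    (ξ : ℝ) (hξ : 0 < ξ) (hne : ξ ≠ xistar n a) (hθ : thetaFun n a ξ = 0) :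
    (∀ i, 0 < (![g1f n a ξ, ξ, g3f n a ξ] : Fin 3 → ℝ) i) ∧
    (∀ j, 0 < bOf n a ξ j) ∧
    isSteady n (kappaOf n a lam) (bOf n a ξ) ∧
    (Zmat n).mulVec (bOf n a ξ) = (Zmat n).mulVec a ∧
    (ξ ≠ 1 → bOf n a ξ ≠ a) ∧
    (∀ ξ' : ℝ, 0 < ξ' → ξ' ≠ xistar n a → thetaFun n a ξ' = 0 → ξ' ≠ ξ →
      bOf n a ξ' ≠ bOf n a ξ) := by
  have hn1 : 1 ≤ n := by omega
  obtain ⟨hFD, hF3D, hPp, hg1, hg3⟩ := key_facts hn1 ha hξ hne hθ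
  have hΔ : Dlt n a ξ ≠ 0 := Dlt_ne ha hne
  have hF1 : F1 n a ξ ≠ 0 := by
    intro h; rw [h, zero_mul] at hFD; exact lt_irrefl _ hFD
  have hF3 : F3 n a ξ ≠ 0 := by
    intro h; rw [h, zero_mul] at hF3D; exact lt_irrefl _ hF3D
  have h3lt : 3*1 < 3*n+3 := by omega
  have h6lt : 3*2 < 3*n+3 := by omega
  have hb3 := bOf_at_3k (n := n) (a := a) (ξ := ξ) (k := 1) le_rfl h3lt
  have hb6 := bOf_at_3k (n := n) (a := a) (ξ := ξ) (k := 2) (by omega) h6lt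
  have ha3 : a ⟨3*1, h3lt⟩ ≠ 0 := ne_of_gt (ha _)
  have ha6 : a ⟨3*2, h6lt⟩ ≠ 0 := ne_of_gt (ha _)
  have hg3ne : (g3f n a ξ)⁻¹ ≠ 0 := inv_ne_zero (ne_of_gt hg3)
  have hξne : ξ ≠ 0 := ne_of_gt hξ
  refine ⟨?_, bOf_pos ha hξ hg1 hg3, steady_of ha hξ (ne_of_gt hg1),
    conservation ha hξ hΔ hF1 hF3 hPp, ?_, ?_⟩
  · intro i
    fin_cases i
    · exact hg1
    · exact hξ
    · exact hg3
  · intro hx1 hba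
    apply hx1
    have h3 := congrFun hba ⟨3*1, h3lt⟩
    have h6 := congrFun hba ⟨3*2, h6lt⟩
    rw [hb3] at h3
    rw [hb6] at h6
    rw [show ((2:ℕ):ℤ)-2 = 0 by norm_num] at h6
    rw [show ((1:ℕ):ℤ)-2 = -1 by norm_num] at h3
    simp only [zpow_zero, zpow_neg_one, one_mul] at h3 h6
    have e6 : (g3f n a ξ)⁻¹ = 1 := mul_right_cancel₀ ha6 (by rw [one_mul]; exact h6)
    have e3 : ξ⁻¹ * (g3f n a ξ)⁻¹ = 1 := mul_right_cancel₀ ha3 (by rw [one_mul]; exact h3)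
    rw [e6, mul_one] at e3
    exact inv_eq_one.mp e3
  · intro ξ' hξ'pos hne' hθ' hxx hba
    apply hxx
    obtain ⟨_, _, _, _, hg3'⟩ := key_facts hn1 ha hξ'pos hne' hθ'
    have hb3' := bOf_at_3k (n := n) (a := a) (ξ := ξ') (k := 1) le_rfl h3lt
    have hb6' := bOf_at_3k (n := n) (a := a) (ξ := ξ') (k := 2) (by omega) h6lt
    have h3 := congrFun hba ⟨3*1, h3lt⟩
    have h6 := congrFun hba ⟨3*2, h6lt⟩
    rw [hb3, hb3'] at h3
    rw [hb6, hb6'] at h6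
    rw [show ((2:ℕ):ℤ)-2 = 0 by norm_num] at h6
    rw [show ((1:ℕ):ℤ)-2 = -1 by norm_num] at h3
    simp only [zpow_zero, zpow_neg_one, one_mul] at h3 h6
    have e6 : (g3f n a ξ')⁻¹ = (g3f n a ξ)⁻¹ := mul_right_cancel₀ ha6 h6
    have e3 : ξ'⁻¹ * (g3f n a ξ')⁻¹ = ξ⁻¹ * (g3f n a ξ)⁻¹ := mul_right_cancel₀ ha3 h3
    rw [e6] at e3
    have heq : ξ'⁻¹ = ξ⁻¹ := mul_right_cancel₀ hg3ne e3
    exact inv_injective heq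

end Phos
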